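/- arXiv:2311.11433 — 2 statements merged into one kernel-verified Lean document; each statement's English description precedes it below -/
import Mathlib

section
/- Fix d ≥ 1 and n ≥ 1 with n ≥ d². Then f(n,d) equals the number of pairs (α, β) of partitions (possibly empty) with |α| + |β| = n - d², where every part of α is at most d and every part of β is at most d - 1. -/
open Multiset


/-- The `d`-th largest part of a partition (1-indexed); `0` if the index is out of range. -/
def nthPart {n : ℕ} (p : n.Partition) (d : ℕ) : ℕ :=
  (p.parts.sort (· ≥ ·)).getD (d - 1) 0

/-- `f n d` is the number of partitions of `n` with fixed point `d`,
i.e. whose `d`-th largest part equals `d`. -/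
noncomputable def f (n d : ℕ) : ℕ :=
  Nat.card {p : n.Partition // nthPart p d = d}
lemma getD_sorted {l : List ℕ} (hl : l.Pairwise (· ≥ ·)) (t j : ℕ) (ht : 0 < t) :
    t ≤ l.getD j 0 ↔ j < l.countP (fun a => t ≤ a) := by
  induction l generalizing j with
  | nil => simp [List.getD]; omega
  | cons a l ih =>
    rw [List.pairwise_cons] at hl
    obtain ⟨ha, hl⟩ := hl
    have hcnt : ¬ t ≤ a → l.countP (fun a => t ≤ a) = 0 := by
      intro h
      rw [List.countP_eq_zero]
      intro b hb
      simp only [decide_eq_true_eq]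
      have := ha b hb
      omega
    cases j with
    | zero =>
      simp only [List.getD_cons_zero, List.countP_cons]
      by_cases h : t ≤ a
      · simp [h]
      · simp [h, hcnt h]
    | succ j =>
      simp only [List.getD_cons_succ, List.countP_cons]
      rw [ih hl]
      by_cases h : t ≤ a
      · simp [h]
      · simp [h, hcnt h]

lemma sort_countP (s : Multiset ℕ) (t : ℕ) :
    (s.sort (· ≥ ·)).countP (fun a => decide (t ≤ a)) = s.countP (fun a => t ≤ a) := by
  conv_rhs => rw [← Multiset.sort_eq (s := s) (r := (· ≥ ·))]
  rw [Multiset.coe_countP]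

lemma nthPart_eq_iff {n d : ℕ} (hd : 1 ≤ d) (p : n.Partition) :
    nthPart p d = d ↔
      (p.parts.countP (fun a => d < a) < d ∧ d ≤ p.parts.countP (fun a => d ≤ a)) := by
  have hs := Multiset.pairwise_sort (s := p.parts) (r := (· ≥ ·))
  have h1 := getD_sorted hs d (d-1) (by omega)
  have h2 := getD_sorted hs (d+1) (d-1) (by omega)
  rw [sort_countP] at h1 h2
  have e2 : p.parts.countP (fun a => d+1 ≤ a) = p.parts.countP (fun a => d < a) :=
    Multiset.countP_congr rfl (fun x _ => by simp)
  rw [e2] at h2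
  unfold nthPart
  omega

open Multiset

/-- number of parts of `s` greater than `j` (column height). -/
def colG (s : Multiset ℕ) (j : ℕ) : ℕ := s.countP (fun a => j < a)

lemma colG_anti (s : Multiset ℕ) {i j : ℕ} (h : i ≤ j) : colG s j ≤ colG s i := by
  unfold colG
  rw [Multiset.countP_eq_card_filter, Multiset.countP_eq_card_filter]
  exact Multiset.card_le_card (Multiset.monotone_filter_right s (fun a ha => by omega))

lemma colG_eq_zero {s : Multiset ℕ} {j : ℕ} (h : s.sup ≤ j) : colG s j = 0 := by
  unfold colG
  rw [Multiset.countP_eq_zero]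
  intro a ha
  have := Multiset.le_sup ha
  omega

lemma colG_pos {s : Multiset ℕ} {j : ℕ} (h : j < s.sup) : 0 < colG s j := by
  rw [colG, Multiset.countP_pos]
  by_contra hc
  push_neg at hc
  have hsup : s.sup ≤ j := Multiset.sup_le.2 (fun b hb => by have := hc b hb; omega)
  omega

/-- conjugate of a multiset of naturals (as Young-diagram transposition). -/
def conjM (s : Multiset ℕ) : Multiset ℕ := (Multiset.range s.sup).map (colG s)

lemma conjM_colG (s : Multiset ℕ) (j : ℕ) :
    colG (conjM s) j = ((Finset.range s.sup).filter (fun i => j < colG s i)).card := by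
  have h : ((Finset.range s.sup).filter (fun i => j < colG s i)).card
      = Multiset.countP (fun i => j < colG s i) (Multiset.range s.sup) := by
    rw [Multiset.countP_eq_card_filter]
    rfl
  rw [colG, conjM, Multiset.countP_map, ← Multiset.countP_eq_card_filter, h]

lemma downset_card {N c : ℕ} {p : ℕ → Prop} [DecidablePred p]
    (hmono : ∀ i i', i' ≤ i → p i → p i') (hN : ∀ i, N ≤ i → ¬ p i)
    (hc : ((Finset.range N).filter p).card = c) (i : ℕ) : p i ↔ i < c := by
  subst hc
  constructor
  · intro hp
    have hsub : Finset.range (i+1) ⊆ (Finset.range N).filter p := by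
      intro x hx
      rw [Finset.mem_range] at hx
      have hpx : p x := hmono i x (by omega) hp
      refine Finset.mem_filter.2 ⟨Finset.mem_range.2 ?_, hpx⟩
      by_contra hxN
      exact hN x (by omega) hpx
    have := Finset.card_le_card hsub
    simpa using this
  · intro hi
    by_contra hp
    have hsub : (Finset.range N).filter p ⊆ Finset.range i := by
      intro x hx
      rw [Finset.mem_filter] at hx
      rw [Finset.mem_range]
      by_contra hxi
      exact hp (hmono x i (by omega) hx.2)
    have := Finset.card_le_card hsub
    simp at this
    omega

lemma colG_conjM (s : Multiset ℕ) (j i : ℕ) : j < colG s i ↔ i < colG (conjM s) j :=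
  downset_card (fun a b hba hpa => lt_of_lt_of_le hpa (colG_anti s hba))
    (fun a ha => by rw [colG_eq_zero ha]; omega) (conjM_colG s j).symm i

lemma colG_conjM_conjM (s : Multiset ℕ) (j : ℕ) : colG (conjM (conjM s)) j = colG s j := by
  have h : ∀ i, i < colG (conjM (conjM s)) j ↔ i < colG s j := fun i =>
    ((colG_conjM (conjM s) j i).symm).trans ((colG_conjM s i j).symm)
  by_contra hne
  rcases Nat.lt_or_ge (colG (conjM (conjM s)) j) (colG s j) with h' | h'
  · have := (h _).2 h'; omega
  · have hlt : colG s j < colG (conjM (conjM s)) j := by omega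
    have := (h _).1 hlt; omega

lemma mem_conjM_pos {s : Multiset ℕ} {a : ℕ} (ha : a ∈ conjM s) : 0 < a := by
  rw [conjM, Multiset.mem_map] at ha
  obtain ⟨j, hj, rfl⟩ := ha
  rw [Multiset.mem_range] at hj
  exact colG_pos hj

lemma count_eq_colG (t : Multiset ℕ) (v : ℕ) :
    t.count (v+1) + colG t (v+1) = colG t v := by
  unfold colG
  rw [Multiset.count, Multiset.countP_eq_card_filter, Multiset.countP_eq_card_filter,
    Multiset.countP_eq_card_filter]
  have h := Multiset.filter_add_not (fun a => v+1 < a) (t.filter (fun a => v < a))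
  rw [Multiset.filter_filter, Multiset.filter_filter] at h
  have e1 : (t.filter fun a => v + 1 < a ∧ v < a) = t.filter (fun a => v+1 < a) :=
    Multiset.filter_congr (fun x _ => by constructor <;> (intro h; omega) )
  have e2 : (t.filter fun a => ¬(v + 1 < a) ∧ v < a) = t.filter (fun a => v+1 = a) :=
    Multiset.filter_congr (fun x _ => by constructor <;> (intro h; omega) )
  rw [e1, e2] at h
  have := congrArg Multiset.card h
  rw [Multiset.card_add] at this
  omega

lemma conjM_conjM {s : Multiset ℕ} (hs : ∀ a ∈ s, 0 < a) : conjM (conjM s) = s := by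
  ext a
  cases a with
  | zero =>
    rw [Multiset.count_eq_zero_of_notMem, Multiset.count_eq_zero_of_notMem]
    · intro h; exact absurd (hs 0 h) (by omega)
    · intro h; exact absurd (mem_conjM_pos h) (by omega)
  | succ v =>
    have h1 := count_eq_colG (conjM (conjM s)) v
    have h2 := count_eq_colG s v
    have e1 := colG_conjM_conjM s v
    have e2 := colG_conjM_conjM s (v+1)
    omega

lemma sum_colG (s : Multiset ℕ) (N : ℕ) (hN : ∀ a ∈ s, a ≤ N) :
    ∑ j ∈ Finset.range N, colG s j = s.sum := by
  induction s using Multiset.induction with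
  | empty => simp [colG]
  | cons a s ih =>
    have ha : a ≤ N := hN a (Multiset.mem_cons_self a s)
    have ih' := ih (fun b hb => hN b (Multiset.mem_cons_of_mem hb))
    simp only [colG, Multiset.countP_cons] at *
    rw [Finset.sum_add_distrib, ih', Multiset.sum_cons]
    have h2 : (∑ x ∈ Finset.range N, if x < a then 1 else 0) = a := by
      have hfe : (Finset.range N).filter (fun j => j < a) = Finset.range a := by
        ext x; simp only [Finset.mem_filter, Finset.mem_range]; omega
      rw [Finset.sum_ite, hfe]
      simp
    rw [h2, add_comm]

lemma conjM_sum (s : Multiset ℕ) : (conjM s).sum = s.sum := by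
  rw [conjM]
  have : (Multiset.range s.sup).map (colG s) = ((Finset.range s.sup).val).map (colG s) := rfl
  rw [this, ← Finset.sum, Finset.sum]
  exact sum_colG s s.sup (fun a ha => Multiset.le_sup ha)

lemma conjM_card (s : Multiset ℕ) : (conjM s).card = s.sup := by
  rw [conjM, Multiset.card_map, Multiset.card_range]

lemma mem_conjM_le {s : Multiset ℕ} {a : ℕ} (ha : a ∈ conjM s) : a ≤ s.card := by
  rw [conjM, Multiset.mem_map] at ha
  obtain ⟨j, _, rfl⟩ := ha
  exact Multiset.countP_le_card _ s

/-- conjugate partition -/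
def conjP {t : ℕ} (p : Nat.Partition t) : Nat.Partition t where
  parts := conjM p.parts
  parts_pos := fun h => mem_conjM_pos h
  parts_sum := by rw [conjM_sum, p.parts_sum]

lemma conjP_conjP {t : ℕ} (p : Nat.Partition t) : conjP (conjP p) = p :=
  Nat.Partition.ext (conjM_conjM (fun a ha => p.parts_pos ha))

/-- The conjugation equivalence between partitions with at most `k` parts and
partitions with all parts at most `k`. -/
def conjEquiv (t k : ℕ) :
    {μ : Nat.Partition t // μ.parts.card ≤ k} ≃ {β : Nat.Partition t // ∀ x ∈ β.parts, x ≤ k} where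
  toFun μ := ⟨conjP μ.1, fun x hx => le_trans (mem_conjM_le hx) μ.2⟩
  invFun β := ⟨conjP β.1, by
    show (conjM β.1.parts).card ≤ k
    rw [conjM_card]
    exact Multiset.sup_le.2 (fun b hb => β.2 b hb)⟩
  left_inv μ := Subtype.ext (conjP_conjP μ.1)
  right_inv β := Subtype.ext (conjP_conjP β.1)

/-! ### Auxiliary sum lemmas -/

lemma sum_map_sub (d : ℕ) (s : Multiset ℕ) (h : ∀ a ∈ s, d ≤ a) :
    (s.map (fun a => a - d)).sum + s.card * d = s.sum := by
  induction s using Multiset.induction with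
  | empty => simp
  | cons a s ih =>
    have ha := h a (Multiset.mem_cons_self a s)
    have ih' := ih (fun b hb => h b (Multiset.mem_cons_of_mem hb))
    simp only [Multiset.map_cons, Multiset.sum_cons, Multiset.card_cons]
    rw [add_mul, one_mul]
    omega

lemma sum_map_addd (d : ℕ) (s : Multiset ℕ) :
    (s.map (fun a => a + d)).sum = s.sum + s.card * d := by
  induction s using Multiset.induction with
  | empty => simp
  | cons a s ih =>
    simp only [Multiset.map_cons, Multiset.sum_cons, Multiset.card_cons]
    rw [add_mul, one_mul]
    omega

/-! ### The forward decomposition -/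

/-- parts of the original partition lying below/right of the `d × d` square:
the parts `≤ d`, minus `d - k` copies of `d` used to fill the square (where `k` is the
number of parts exceeding `d`). -/
def fwdA (d : ℕ) (s : Multiset ℕ) : Multiset ℕ :=
  s.filter (fun a => ¬ d < a) - Multiset.replicate (d - s.countP (fun a => d < a)) d

/-- the rows of the partition extending to the right of the `d × d` square. -/
def fwdM (d : ℕ) (s : Multiset ℕ) : Multiset ℕ :=
  (s.filter (fun a => d < a)).map (fun a => a - d)

lemma fwd_facts (d : ℕ) (s : Multiset ℕ)
    (H1 : s.countP (fun a => d < a) < d) (H2 : d ≤ s.countP (fun a => d ≤ a)) :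
    Multiset.replicate (d - s.countP (fun a => d < a)) d ≤ s.filter (fun a => ¬ d < a) ∧
    (fwdA d s).sum + (fwdM d s).sum + d ^ 2 = s.sum := by
  set k := s.countP (fun a => d < a) with hk
  have hsplit : s.countP (fun a => d ≤ a) = k + s.count d := by
    have h := Multiset.filter_add_not (fun a => d < a) (s.filter (fun a => d ≤ a))
    rw [Multiset.filter_filter, Multiset.filter_filter] at h
    have e1 : (s.filter fun a => d < a ∧ d ≤ a) = s.filter (fun a => d < a) :=
      Multiset.filter_congr (fun x _ => by constructor <;> (intro hh; omega))
    have e2 : (s.filter fun a => ¬(d < a) ∧ d ≤ a) = s.filter (fun a => d = a) :=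
      Multiset.filter_congr (fun x _ => by constructor <;> (intro hh; omega))
    rw [e1, e2] at h
    have hcard := congrArg Multiset.card h
    rw [Multiset.card_add] at hcard
    rw [hk, Multiset.countP_eq_card_filter, Multiset.countP_eq_card_filter,
      Multiset.count_eq_card_filter_eq]
    omega
  have hcnt : d - k ≤ (s.filter (fun a => ¬ d < a)).count d := by
    rw [Multiset.count_filter_of_pos (p := fun a => ¬ d < a) (by omega)]
    omega
  have hrep : Multiset.replicate (d - k) d ≤ s.filter (fun a => ¬ d < a) :=
    Multiset.le_count_iff_replicate_le.1 hcnt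
  refine ⟨hrep, ?_⟩
  have hA : fwdA d s + Multiset.replicate (d - k) d = s.filter (fun a => ¬ d < a) :=
    tsub_add_cancel_of_le hrep
  have hbig : ∀ a ∈ s.filter (fun a => d < a), d ≤ a :=
    fun a ha => le_of_lt (Multiset.of_mem_filter ha)
  have hbigcard : (s.filter (fun a => d < a)).card = k :=
    (Multiset.countP_eq_card_filter _ s).symm
  have hMsum0 := sum_map_sub d _ hbig
  rw [hbigcard] at hMsum0
  have hMsum : (fwdM d s).sum + k * d = (s.filter (fun a => d < a)).sum := hMsum0
  have hsplit2 := congrArg Multiset.sum (Multiset.filter_add_not (fun a => d < a) s)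
  rw [Multiset.sum_add] at hsplit2
  have hAsum := congrArg Multiset.sum hA
  rw [Multiset.sum_add, Multiset.sum_replicate, smul_eq_mul] at hAsum
  have hsq : k * d + (d - k) * d = d ^ 2 := by
    rw [← add_mul, (by omega : k + (d - k) = d), pow_two]
  calc (fwdA d s).sum + (fwdM d s).sum + d ^ 2
      = (fwdA d s).sum + (fwdM d s).sum + (k * d + (d - k) * d) := by rw [hsq]
    _ = ((fwdM d s).sum + k * d) + ((fwdA d s).sum + (d - k) * d) := by ring
    _ = (s.filter (fun a => d < a)).sum + (s.filter (fun a => ¬ d < a)).sum := by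
        rw [hMsum, hAsum]
    _ = s.sum := hsplit2

/-! ### Sigma extensionality -/

lemma sigma_ext {m d : ℕ}
    (x y : Σ i : Fin (m + 1), {α : Nat.Partition ↑i // ∀ a ∈ α.parts, a ≤ d} ×
      {μ : Nat.Partition (m - ↑i) // μ.parts.card ≤ d - 1})
    (h1 : x.2.1.1.parts = y.2.1.1.parts) (h2 : x.2.2.1.parts = y.2.2.1.parts) : x = y := by
  obtain ⟨⟨i, hi⟩, ⟨α, hα⟩, ⟨μ, hμ⟩⟩ := x
  obtain ⟨⟨j, hj⟩, ⟨β, hβ⟩, ⟨ν, hν⟩⟩ := y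
  simp only at h1 h2
  have hi' : α.parts.sum = i := α.parts_sum
  have hj' : β.parts.sum = j := β.parts_sum
  have hij : i = j := by rw [← hi', ← hj', h1]
  subst hij
  have hαβ : α = β := Nat.Partition.ext h1
  have hμν : μ = ν := Nat.Partition.ext h2
  subst hαβ
  subst hμν
  rfl

/-! ### The main equivalence -/

set_option maxHeartbeats 2000000 in

def mainEquiv (n d : ℕ) (hd : 1 ≤ d) (hn : d ^ 2 ≤ n) :
    {p : n.Partition // nthPart p d = d} ≃
      (Σ i : Fin (n - d ^ 2 + 1), {α : Nat.Partition ↑i // ∀ a ∈ α.parts, a ≤ d} ×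
        {μ : Nat.Partition (n - d ^ 2 - ↑i) // μ.parts.card ≤ d - 1}) where
  toFun p :=
    ⟨⟨(fwdA d p.1.parts).sum, by
        obtain ⟨H1, H2⟩ := (nthPart_eq_iff hd p.1).1 p.2
        have hf := (fwd_facts d p.1.parts H1 H2).2
        rw [p.1.parts_sum] at hf
        omega⟩,
     ⟨⟨{ parts := fwdA d p.1.parts
         parts_pos := by
           intro a ha
           have hmem : a ∈ p.1.parts.filter (fun a => ¬ d < a) :=
             Multiset.mem_of_le tsub_le_self ha
           exact p.1.parts_pos (Multiset.mem_of_mem_filter hmem)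
         parts_sum := rfl }, by
        intro a ha
        have hmem : a ∈ p.1.parts.filter (fun a => ¬ d < a) :=
          Multiset.mem_of_le tsub_le_self ha
        have := Multiset.of_mem_filter hmem
        omega⟩,
      ⟨{ parts := fwdM d p.1.parts
         parts_pos := by
           intro a ha
           rw [fwdM, Multiset.mem_map] at ha
           obtain ⟨b, hb, rfl⟩ := ha
           have := Multiset.of_mem_filter hb
           omega
         parts_sum := by
           show (fwdM d p.1.parts).sum = n - d ^ 2 - (fwdA d p.1.parts).sum
           obtain ⟨H1, H2⟩ := (nthPart_eq_iff hd p.1).1 p.2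
           have hf := (fwd_facts d p.1.parts H1 H2).2
           rw [p.1.parts_sum] at hf
           omega }, by
        show (fwdM d p.1.parts).card ≤ d - 1
        obtain ⟨H1, H2⟩ := (nthPart_eq_iff hd p.1).1 p.2
        rw [fwdM, Multiset.card_map, ← Multiset.countP_eq_card_filter]
        omega⟩⟩⟩
  invFun x :=
    ⟨{ parts := x.2.2.1.parts.map (fun a => a + d) +
          Multiset.replicate (d - x.2.2.1.parts.card) d + x.2.1.1.parts
       parts_pos := by
         intro a ha
         rw [Multiset.mem_add, Multiset.mem_add] at ha
         rcases ha with (ha | ha) | ha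
         · rw [Multiset.mem_map] at ha
           obtain ⟨b, hb, rfl⟩ := ha
           omega
         · rw [Multiset.eq_of_mem_replicate ha]
           omega
         · exact x.2.1.1.parts_pos ha
       parts_sum := by
         rw [Multiset.sum_add, Multiset.sum_add, sum_map_addd, Multiset.sum_replicate,
           smul_eq_mul, x.2.2.1.parts_sum, x.2.1.1.parts_sum]
         have hc : x.2.2.1.parts.card ≤ d - 1 := x.2.2.2
         have hi : (x.1 : ℕ) < n - d ^ 2 + 1 := x.1.2
         have hsq : x.2.2.1.parts.card * d + (d - x.2.2.1.parts.card) * d = d ^ 2 := by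
           rw [← add_mul, (by omega : x.2.2.1.parts.card + (d - x.2.2.1.parts.card) = d),
             pow_two]
         omega },
     by
      rw [nthPart_eq_iff hd]
      have hmap : (x.2.2.1.parts.map (fun a => a + d)).countP (fun a => d < a) =
          x.2.2.1.parts.card := by
        rw [← Multiset.card_map (fun a => a + d)]
        refine Multiset.countP_eq_card.2 ?_
        intro a ha
        rw [Multiset.mem_map] at ha
        obtain ⟨b, hb, rfl⟩ := ha
        have := x.2.2.1.parts_pos hb
        omega
      have hmap2 : (x.2.2.1.parts.map (fun a => a + d)).countP (fun a => d ≤ a) =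
          x.2.2.1.parts.card := by
        rw [← Multiset.card_map (fun a => a + d)]
        refine Multiset.countP_eq_card.2 ?_
        intro a ha
        rw [Multiset.mem_map] at ha
        obtain ⟨b, hb, rfl⟩ := ha
        omega
      have hrep : (Multiset.replicate (d - x.2.2.1.parts.card) d).countP (fun a => d < a)
          = 0 := Multiset.countP_eq_zero.2
            (fun a ha => by rw [Multiset.eq_of_mem_replicate ha]; omega)
      have hrep2 : (Multiset.replicate (d - x.2.2.1.parts.card) d).countP (fun a => d ≤ a)
          = d - x.2.2.1.parts.card := by
        rw [Multiset.countP_eq_card.2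
          (fun a ha => (Multiset.eq_of_mem_replicate ha).ge), Multiset.card_replicate]
      have hα : (x.2.1.1.parts).countP (fun a => d < a) = 0 :=
        Multiset.countP_eq_zero.2 (fun a ha => by have := x.2.1.2 a ha; omega)
      have hc : x.2.2.1.parts.card ≤ d - 1 := x.2.2.2
      constructor
      · rw [Multiset.countP_add, Multiset.countP_add, hmap, hrep, hα]
        omega
      · rw [Multiset.countP_add, Multiset.countP_add, hmap2, hrep2]
        omega⟩
  left_inv p := by
    apply Subtype.ext
    apply Nat.Partition.ext
    have H12 := (nthPart_eq_iff hd p.1).1 p.2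
    have hrep := (fwd_facts d p.1.parts H12.1 H12.2).1
    show (fwdM d p.1.parts).map (fun a => a + d) +
        Multiset.replicate (d - (fwdM d p.1.parts).card) d + fwdA d p.1.parts = p.1.parts
    have hcard : (fwdM d p.1.parts).card = p.1.parts.countP (fun a => d < a) := by
      rw [fwdM, Multiset.card_map, ← Multiset.countP_eq_card_filter]
    have hmapback : (fwdM d p.1.parts).map (fun a => a + d) =
        p.1.parts.filter (fun a => d < a) := by
      rw [fwdM, Multiset.map_map]
      have := Multiset.map_congr (f := (fun a => a + d) ∘ (fun a => a - d)) (g := id)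
        (rfl : p.1.parts.filter (fun a => d < a) = p.1.parts.filter (fun a => d < a))
        (fun a ha => by
          have := Multiset.of_mem_filter ha
          simp only [Function.comp_apply, id_eq]
          omega)
      rw [this, Multiset.map_id]
    rw [hmapback, hcard]
    have hA : fwdA d p.1.parts +
        Multiset.replicate (d - p.1.parts.countP (fun a => d < a)) d =
        p.1.parts.filter (fun a => ¬ d < a) := tsub_add_cancel_of_le hrep
    have hcomm : p.1.parts.filter (fun a => d < a) +
        Multiset.replicate (d - p.1.parts.countP (fun a => d < a)) d + fwdA d p.1.parts =
        p.1.parts.filter (fun a => d < a) +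
        (fwdA d p.1.parts +
          Multiset.replicate (d - p.1.parts.countP (fun a => d < a)) d) := by
      abel
    rw [hcomm, hA, Multiset.filter_add_not]
  right_inv x := by
    apply sigma_ext
    case h1 =>
      show fwdA d (x.2.2.1.parts.map (fun a => a + d) +
          Multiset.replicate (d - x.2.2.1.parts.card) d + x.2.1.1.parts) = x.2.1.1.parts
      have hmap : (x.2.2.1.parts.map (fun a => a + d)).countP (fun a => d < a) =
          x.2.2.1.parts.card := by
        rw [← Multiset.card_map (fun a => a + d)]
        refine Multiset.countP_eq_card.2 ?_
        intro a ha
        rw [Multiset.mem_map] at ha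
        obtain ⟨b, hb, rfl⟩ := ha
        have := x.2.2.1.parts_pos hb
        omega
      have hrep : (Multiset.replicate (d - x.2.2.1.parts.card) d).countP (fun a => d < a)
          = 0 := Multiset.countP_eq_zero.2
            (fun a ha => by rw [Multiset.eq_of_mem_replicate ha]; omega)
      have hα : (x.2.1.1.parts).countP (fun a => d < a) = 0 :=
        Multiset.countP_eq_zero.2 (fun a ha => by have := x.2.1.2 a ha; omega)
      have hcnt : (x.2.2.1.parts.map (fun a => a + d) +
          Multiset.replicate (d - x.2.2.1.parts.card) d + x.2.1.1.parts).countP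
            (fun a => d < a) = x.2.2.1.parts.card := by
        rw [Multiset.countP_add, Multiset.countP_add, hmap, hrep, hα]
        omega
      have hg1 : (x.2.2.1.parts.map (fun a => a + d)).filter (fun a => ¬ d < a) = 0 :=
        Multiset.filter_eq_nil.2 (fun a ha => by
          rw [Multiset.mem_map] at ha
          obtain ⟨b, hb, rfl⟩ := ha
          have := x.2.2.1.parts_pos hb
          omega)
      have hg2 : (Multiset.replicate (d - x.2.2.1.parts.card) d).filter (fun a => ¬ d < a)
          = Multiset.replicate (d - x.2.2.1.parts.card) d :=
        Multiset.filter_eq_self.2 (fun a ha => by rw [Multiset.eq_of_mem_replicate ha]; omega)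
      have hg3 : (x.2.1.1.parts).filter (fun a => ¬ d < a) = x.2.1.1.parts :=
        Multiset.filter_eq_self.2 (fun a ha => by have := x.2.1.2 a ha; omega)
      rw [fwdA, hcnt, Multiset.filter_add, Multiset.filter_add, hg1, hg2, hg3, zero_add]
      exact add_tsub_cancel_left _ _
    case h2 =>
      show fwdM d (x.2.2.1.parts.map (fun a => a + d) +
          Multiset.replicate (d - x.2.2.1.parts.card) d + x.2.1.1.parts) = x.2.2.1.parts
      have hf1 : (x.2.2.1.parts.map (fun a => a + d)).filter (fun a => d < a) =
          x.2.2.1.parts.map (fun a => a + d) :=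
        Multiset.filter_eq_self.2 (fun a ha => by
          rw [Multiset.mem_map] at ha
          obtain ⟨b, hb, rfl⟩ := ha
          have := x.2.2.1.parts_pos hb
          omega)
      have hf2 : (Multiset.replicate (d - x.2.2.1.parts.card) d).filter (fun a => d < a)
          = 0 :=
        Multiset.filter_eq_nil.2 (fun a ha => by rw [Multiset.eq_of_mem_replicate ha]; omega)
      have hf3 : (x.2.1.1.parts).filter (fun a => d < a) = 0 :=
        Multiset.filter_eq_nil.2 (fun a ha => by have := x.2.1.2 a ha; omega)
      rw [fwdM, Multiset.filter_add, Multiset.filter_add, hf1, hf2, hf3, add_zero, add_zero,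
        Multiset.map_map]
      have hid := Multiset.map_congr (f := (fun a => a - d) ∘ (fun a => a + d)) (g := id)
        (rfl : x.2.2.1.parts = x.2.2.1.parts)
        (fun a _ => by simp only [Function.comp_apply, id_eq]; omega)
      rw [hid, Multiset.map_id]

/-- For `d ≥ 1` and `n ≥ d²`, `f(n,d)` equals the number of pairs `(α, β)` of
partitions with `|α| + |β| = n - d²`, where all parts of `α` are at most `d` and
all parts of `β` are at most `d - 1`. -/
theorem f_eq_pairs_count (n d : ℕ) (hd : 1 ≤ d) (hn : d ^ 2 ≤ n) :
    f n d = ∑ i ∈ Finset.range (n - d ^ 2 + 1),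
      Nat.card {α : Nat.Partition i // ∀ x ∈ α.parts, x ≤ d} *
        Nat.card {β : Nat.Partition (n - d ^ 2 - i) // ∀ x ∈ β.parts, x ≤ d - 1} := by
  rw [← Fin.sum_univ_eq_sum_range (fun i => Nat.card {α : Nat.Partition i // ∀ x ∈ α.parts, x ≤ d} *
        Nat.card {β : Nat.Partition (n - d ^ 2 - i) // ∀ x ∈ β.parts, x ≤ d - 1}) (n - d ^ 2 + 1)]
  rw [f, Nat.card_congr (mainEquiv n d hd hn), Nat.card_eq_fintype_card, Fintype.card_sigma]
  refine Finset.sum_congr rfl (fun i _ => ?_)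
  rw [Fintype.card_prod]
  congr 1
  · rw [Nat.card_eq_fintype_card]
  · rw [← Nat.card_eq_fintype_card, ← Nat.card_congr (conjEquiv (n - d ^ 2 - ↑i) (d - 1))]
end

section
/- For every n ≥ 1, the number of partitions μ of n+1 for which there exists d ≥ 1 with μ_d = μ_{d+1} = d equals the sum over all d ≥ 1 of f(n+1-d, d). -/
/-- Number of parts of `s` that are `≥ v`. -/
def cnt (s : Multiset ℕ) (v : ℕ) : ℕ := Multiset.countP (fun x => v ≤ x) s

lemma cnt_cons (s : Multiset ℕ) (a v : ℕ) :
    cnt (a ::ₘ s) v = cnt s v + if v ≤ a then 1 else 0 :=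
  Multiset.countP_cons _ _ _

lemma cnt_anti (s : Multiset ℕ) {u v : ℕ} (h : u ≤ v) : cnt s v ≤ cnt s u := by
  induction s using Multiset.induction_on with
  | empty => simp [cnt]
  | cons a t ih => rw [cnt_cons, cnt_cons]; split_ifs <;> omega

lemma cnt_split (s : Multiset ℕ) (d : ℕ) :
    cnt s d = cnt s (d + 1) + s.count d := by
  induction s using Multiset.induction_on with
  | empty => simp [cnt]
  | cons a t ih =>
    rw [cnt_cons, cnt_cons, Multiset.count_cons]
    split_ifs <;> omega

lemma mem_of_counts {s : Multiset ℕ} {d : ℕ} (h1 : d + 1 ≤ cnt s d)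
    (h2 : cnt s (d + 1) < d) : d ∈ s := by
  have := cnt_split s d
  exact Multiset.count_pos.mp (by omega)

lemma cnt_erase (s : Multiset ℕ) (d v : ℕ) (hm : d ∈ s) :
    cnt s v = cnt (s.erase d) v + if v ≤ d then 1 else 0 := by
  conv_lhs => rw [← Multiset.cons_erase hm]
  exact cnt_cons _ _ _

lemma sorted_getD {v : ℕ} (hv : 1 ≤ v) (l : List ℕ) (hl : List.Pairwise (· ≥ ·) l) :
    ∀ i, (v ≤ l.getD i 0 ↔ i < cnt (↑l) v) := by
  induction l with
  | nil => intro i; simp [cnt]; omega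
  | cons a t ih =>
    have ha : ∀ b ∈ t, b ≤ a := (List.pairwise_cons.mp hl).1
    have ht : List.Pairwise (· ≥ ·) t := (List.pairwise_cons.mp hl).2
    have iht := ih ht
    intro i
    have hc : cnt (↑(a :: t)) v = cnt (↑t) v + if v ≤ a then 1 else 0 := by
      rw [← Multiset.cons_coe]; exact cnt_cons _ _ _
    have ht0 : ¬ v ≤ a → cnt (↑t) v = 0 := by
      intro h
      refine Multiset.countP_eq_zero.mpr fun x hx => ?_
      have := ha x (by exact_mod_cast hx)
      omega
    cases i with
    | zero =>
      rw [List.getD_cons_zero, hc]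
      by_cases h : v ≤ a
      · rw [if_pos h]; omega
      · rw [if_neg h, ht0 h]; omega
    | succ i =>
      rw [List.getD_cons_succ, hc, iht i]
      by_cases h : v ≤ a
      · rw [if_pos h]; omega
      · rw [if_neg h, ht0 h]; omega

lemma nthPart_eq_iff_s17 {n : ℕ} (p : n.Partition) {i v : ℕ} (hi : 1 ≤ i) (hv : 1 ≤ v) :
    nthPart p i = v ↔ (i ≤ cnt p.parts v ∧ cnt p.parts (v + 1) < i) := by
  have hs := Multiset.pairwise_sort p.parts (· ≥ ·)
  have he : ((p.parts.sort (· ≥ ·) : List ℕ) : Multiset ℕ) = p.parts :=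
    Multiset.sort_eq _ _
  have h1 := sorted_getD hv _ hs (i - 1)
  have h2 := sorted_getD (v := v + 1) (by omega) _ hs (i - 1)
  rw [he] at h1 h2
  unfold nthPart
  omega

lemma double_char {N : ℕ} (μ : N.Partition) {d : ℕ} (hd : 1 ≤ d) :
    (nthPart μ d = d ∧ nthPart μ (d + 1) = d) ↔
      (d + 1 ≤ cnt μ.parts d ∧ cnt μ.parts (d + 1) < d) := by
  rw [nthPart_eq_iff_s17 μ hd hd, nthPart_eq_iff_s17 μ (by omega) hd]
  omega

lemma card_le_sum_of_pos (s : Multiset ℕ) (h : ∀ x ∈ s, 0 < x) :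
    Multiset.card s ≤ s.sum := by
  induction s using Multiset.induction_on with
  | empty => simp
  | cons a t ih =>
    simp only [Multiset.card_cons, Multiset.sum_cons]
    have h1 := h a (Multiset.mem_cons_self a t)
    have h2 := ih (fun x hx => h x (Multiset.mem_cons_of_mem hx))
    omega

lemma d_le_bound {N : ℕ} (μ : N.Partition) {d : ℕ} (h : d + 1 ≤ cnt μ.parts d) :
    d + 1 ≤ N :=
  calc d + 1 ≤ cnt μ.parts d := h
    _ ≤ Multiset.card μ.parts := Multiset.countP_le_card _ _
    _ ≤ μ.parts.sum := card_le_sum_of_pos _ (fun _ hx => μ.parts_pos hx)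
    _ = N := μ.parts_sum

/-- Removing one part equal to `d`. -/
def eraseFun (n d : ℕ) (μ : (n + 1).Partition) (h1 : d + 1 ≤ cnt μ.parts d)
    (h2 : cnt μ.parts (d + 1) < d) : (n + 1 - d).Partition where
  parts := μ.parts.erase d
  parts_pos := fun hi => μ.parts_pos (Multiset.mem_of_mem_erase hi)
  parts_sum := by
    have hm : d ∈ μ.parts := mem_of_counts h1 h2
    have hc := Multiset.cons_erase hm
    have hs : μ.parts.sum = n + 1 := μ.parts_sum
    rw [← hc, Multiset.sum_cons] at hs
    omega

/-- Adding one part equal to `d`. -/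
def consFun (n d : ℕ) (hd : 1 ≤ d) (hdn : d ≤ n + 1) (p : (n + 1 - d).Partition) :
    (n + 1).Partition where
  parts := d ::ₘ p.parts
  parts_pos := fun hi => by
    rcases Multiset.mem_cons.mp hi with h | h
    · omega
    · exact p.parts_pos h
  parts_sum := by
    rw [Multiset.sum_cons, p.parts_sum]
    omega

noncomputable def keyEquiv (n d : ℕ) (hd : 1 ≤ d) (hdn : d ≤ n + 1) :
    {μ : (n + 1).Partition // nthPart μ d = d ∧ nthPart μ (d + 1) = d} ≃
      {p : (n + 1 - d).Partition // nthPart p d = d} where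
  toFun := fun μ =>
    ⟨eraseFun n d μ.1 ((double_char μ.1 hd).mp μ.2).1 ((double_char μ.1 hd).mp μ.2).2, by
      have h := (double_char μ.1 hd).mp μ.2
      rw [nthPart_eq_iff_s17 _ hd hd]
      have hm : d ∈ μ.1.parts := mem_of_counts h.1 h.2
      have e1 := cnt_erase μ.1.parts d d hm
      have e2 := cnt_erase μ.1.parts d (d + 1) hm
      rw [if_pos le_rfl] at e1
      rw [if_neg (by omega)] at e2
      show d ≤ cnt (μ.1.parts.erase d) d ∧ cnt (μ.1.parts.erase d) (d + 1) < d
      omega⟩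
  invFun := fun p =>
    ⟨consFun n d hd hdn p.1, by
      have h := (nthPart_eq_iff_s17 p.1 hd hd).mp p.2
      rw [double_char _ hd]
      show d + 1 ≤ cnt (d ::ₘ p.1.parts) d ∧ cnt (d ::ₘ p.1.parts) (d + 1) < d
      rw [cnt_cons, cnt_cons, if_pos le_rfl, if_neg (by omega)]
      omega⟩
  left_inv := fun μ => by
    apply Subtype.ext; apply Nat.Partition.ext
    show d ::ₘ (μ.1.parts.erase d) = μ.1.parts
    have h := (double_char μ.1 hd).mp μ.2
    exact Multiset.cons_erase (mem_of_counts h.1 h.2)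
  right_inv := fun p => by
    apply Subtype.ext; apply Nat.Partition.ext
    show (d ::ₘ p.1.parts).erase d = p.1.parts
    exact Multiset.erase_cons_head _ _

lemma card_eq_f (n d : ℕ) (hd : 1 ≤ d) (hdn : d ≤ n + 1) :
    Nat.card {μ : (n + 1).Partition // nthPart μ d = d ∧ nthPart μ (d + 1) = d} =
      f (n + 1 - d) d :=
  Nat.card_congr (keyEquiv n d hd hdn)

/-- For `n ≥ 1`, the number of partitions `μ` of `n+1` with `μ_d = μ_{d+1} = d` for
some `d ≥ 1` equals `∑_{d ≥ 1} f(n+1-d, d)` (terms with `d > n+1` vanish, so the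
sum is truncated at `d = n+1`). -/
theorem double_fixed_eq_diagonal_sum (n : ℕ) (hn : 1 ≤ n) :
    Nat.card {m : (n + 1).Partition //
        ∃ d, 1 ≤ d ∧ nthPart m d = d ∧ nthPart m (d + 1) = d} =
      ∑ d ∈ Finset.Icc 1 (n + 1), f (n + 1 - d) d := by
  classical
  rw [Nat.card_eq_fintype_card, Fintype.card_subtype]
  have key : (Finset.univ.filter fun m : (n + 1).Partition =>
      ∃ d, 1 ≤ d ∧ nthPart m d = d ∧ nthPart m (d + 1) = d) =
      (Finset.Icc 1 (n + 1)).biUnion (fun d => Finset.univ.filter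
        (fun m : (n + 1).Partition => nthPart m d = d ∧ nthPart m (d + 1) = d)) := by
    ext μ
    simp only [Finset.mem_filter, Finset.mem_univ, true_and, Finset.mem_biUnion,
      Finset.mem_Icc]
    constructor
    · rintro ⟨d, hd, h1, h2⟩
      refine ⟨d, ⟨hd, ?_⟩, h1, h2⟩
      have h := (double_char μ hd).mp ⟨h1, h2⟩
      have := d_le_bound μ h.1
      omega
    · rintro ⟨d, ⟨hd, _⟩, h1, h2⟩
      exact ⟨d, hd, h1, h2⟩
  rw [key, Finset.card_biUnion]
  · refine Finset.sum_congr rfl fun d hd => ?_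
    rw [Finset.mem_Icc] at hd
    rw [← card_eq_f n d hd.1 hd.2, Nat.card_eq_fintype_card, Fintype.card_subtype]
  · intro d hd e he hne
    rw [Finset.mem_coe, Finset.mem_Icc] at hd he
    rw [Function.onFun, Finset.disjoint_left]
    rintro μ h1 h2
    rw [Finset.mem_filter] at h1 h2
    have hd1 := (double_char μ hd.1).mp h1.2
    have he1 := (double_char μ he.1).mp h2.2
    rcases Nat.lt_or_ge d e with h | h
    · have := cnt_anti μ.parts (show d + 1 ≤ e by omega)
      omega
    · have hlt : e < d := by omega
      have := cnt_anti μ.parts (show e + 1 ≤ d by omega)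
      omega
end
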